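/- Suppose φ : D₀ → ℂ is a continuous function on D₀ = {diag(e^{t₁},…,e^{t_q}) : t₁ ≥ ⋯ ≥ t_q} satisfying the product formula φ(a)φ(b) = ∫_{U(q)} φ(σ_sing(akb)) dk for all a, b ∈ D₀, where σ_sing(M) is the diagonal matrix of singular values of M in decreasing order. Then φ is uniquely determined by its restriction to D = {diag(cosh t₁,…,cosh t_q) : t₁ ≥ ⋯ ≥ t_q ≥ 0}; explicitly, φ(r·b) = φ(r·I)φ(b) for r > 0 and b ∈ D, and φ(r⁻¹·I) = 1/φ(r·I) for r ≥ 1. -/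

import Mathlib

open MeasureTheory
open scoped ComplexOrder

noncomputable instance matrixMeasSpace' (q : ℕ) :
    MeasurableSpace (Matrix (Fin q) (Fin q) ℂ) :=
  inferInstanceAs (MeasurableSpace (Fin q → Fin q → ℂ))

/-- The singular values of a square complex matrix, in decreasing order. -/
noncomputable def singValsDec {q : ℕ} (M : Matrix (Fin q) (Fin q) ℂ) : Fin q → ℝ :=
  fun i =>
    let s : Fin q → ℝ := fun j =>
      Real.sqrt ((Matrix.posSemidef_conjTranspose_mul_self M).1.eigenvalues j)
    (s ∘ Tuple.sort s) i.rev

/-- Identification of `D₀` (decreasing positive diagonal matrices) with tuples. -/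
def A₀ (q : ℕ) : Set (Fin q → ℝ) :=
  {x | (∀ i j : Fin q, i ≤ j → x j ≤ x i) ∧ ∀ i, 0 < x i}

/-- Identification of `D = {diag(cosh t₁,…,cosh t_q) : t₁ ≥ ⋯ ≥ t_q ≥ 0}` with tuples:
decreasing tuples with entries `≥ 1`. -/
def Dset (q : ℕ) : Set (Fin q → ℝ) :=
  {x | (∀ i j : Fin q, i ≤ j → x j ≤ x i) ∧ ∀ i, 1 ≤ x i}

/-- The multiset of eigenvalues of a diagonal matrix with real entries is the multiset of
those entries. -/
lemma eig_perm_of_diagonal {q : ℕ} (A : Matrix (Fin q) (Fin q) ℂ) (hA : A.IsHermitian)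
    (d : Fin q → ℝ) (h : A = Matrix.diagonal (fun i => (d i : ℂ))) :
    (List.ofFn hA.eigenvalues).Perm (List.ofFn d) := by
  classical
  set U : Matrix (Fin q) (Fin q) ℂ := (hA.eigenvectorUnitary : Matrix (Fin q) (Fin q) ℂ) with hUdef
  have hUU : U * star U = 1 := Matrix.mem_unitaryGroup_iff.mp hA.eigenvectorUnitary.2
  have hdet : ∀ x : ℂ, ∏ i, (x - (d i : ℂ)) = ∏ i, (x - (hA.eigenvalues i : ℂ)) := by
    intro x
    have e1 : x • (1 : Matrix (Fin q) (Fin q) ℂ) - A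
        = Matrix.diagonal (fun i => x - (d i : ℂ)) := by
      rw [h, Matrix.smul_one_eq_diagonal, Matrix.diagonal_sub]
    have e2 : x • (1 : Matrix (Fin q) (Fin q) ℂ) - A
        = U * Matrix.diagonal (fun i => x - (hA.eigenvalues i : ℂ)) * star U := by
      have eE : Matrix.diagonal (fun i => x - (hA.eigenvalues i : ℂ))
          = x • (1 : Matrix (Fin q) (Fin q) ℂ)
            - Matrix.diagonal (RCLike.ofReal ∘ hA.eigenvalues) := by
        rw [Matrix.smul_one_eq_diagonal, Matrix.diagonal_sub]
        rfl
      rw [eE, Matrix.mul_sub, Matrix.sub_mul, mul_smul_comm, mul_one, smul_mul_assoc, hUU]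
      conv_lhs => rw [hA.spectral_theorem]
      rfl
    have := congrArg Matrix.det e1
    rw [e2, Matrix.det_mul, Matrix.det_mul, Matrix.det_diagonal, Matrix.det_diagonal] at this
    have hdetU : U.det * (star U).det = 1 := by
      rw [← Matrix.det_mul, hUU, Matrix.det_one]
    calc ∏ i, (x - (d i : ℂ)) = U.det * (∏ i, (x - (hA.eigenvalues i : ℂ))) * (star U).det :=
          this.symm
      _ = (∏ i, (x - (hA.eigenvalues i : ℂ))) * (U.det * (star U).det) := by ring
      _ = ∏ i, (x - (hA.eigenvalues i : ℂ)) := by rw [hdetU, mul_one]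
  -- polynomial identity
  have hpoly : (∏ i, (Polynomial.X - Polynomial.C ((d i : ℂ))))
      = ∏ i, (Polynomial.X - Polynomial.C ((hA.eigenvalues i : ℂ))) := by
    apply Polynomial.funext
    intro x
    simpa [Polynomial.eval_prod] using hdet x
  -- multiset identity over ℂ
  have hms : (Finset.univ.val.map (fun i => (d i : ℂ)))
      = (Finset.univ.val.map (fun i => (hA.eigenvalues i : ℂ))) := by
    have r1 := Polynomial.roots_multiset_prod_X_sub_C
      (Finset.univ.val.map (fun i => (d i : ℂ)))
    have r2 := Polynomial.roots_multiset_prod_X_sub_C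
      (Finset.univ.val.map (fun i => (hA.eigenvalues i : ℂ)))
    rw [← r1, ← r2]
    congr 1
    rw [Multiset.map_map, Multiset.map_map]
    simpa [Finset.prod_eq_multiset_prod] using hpoly
  -- strip the coercion
  have hmsR : (Finset.univ.val.map d) = (Finset.univ.val.map hA.eigenvalues) := by
    apply Multiset.map_injective (f := (Complex.ofReal : ℝ → ℂ)) Complex.ofReal_injective
    rw [Multiset.map_map, Multiset.map_map]
    exact hms
  -- convert to lists
  have hl : ∀ f : Fin q → ℝ, (Finset.univ.val.map f) = ((List.ofFn f : List ℝ) : Multiset ℝ) := by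
    intro f
    rw [List.ofFn_eq_map]
    rfl
  rw [hl, hl] at hmsR
  exact (Multiset.coe_eq_coe.mp hmsR).symm

lemma singValsDec_scalar_mul {q : ℕ} (s : ℝ) (hs : 0 ≤ s) (b : Fin q → ℝ)
    (hbd : ∀ i j : Fin q, i ≤ j → b j ≤ b i) (hb0 : ∀ i, 0 ≤ b i)
    (k : Matrix.unitaryGroup (Fin q) ℂ) :
    singValsDec (Matrix.diagonal (fun _ => (s : ℂ)) * (k : Matrix (Fin q) (Fin q) ℂ) *
      Matrix.diagonal (fun i => (b i : ℂ))) = fun i => s * b i := by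
  classical
  set M : Matrix (Fin q) (Fin q) ℂ :=
    Matrix.diagonal (fun _ => (s : ℂ)) * (k : Matrix (Fin q) (Fin q) ℂ) *
      Matrix.diagonal (fun i => (b i : ℂ)) with hMdef
  have hkk : star (k : Matrix (Fin q) (Fin q) ℂ) * (k : Matrix (Fin q) (Fin q) ℂ) = 1 := k.2.1
  have hM : M.conjTranspose * M = Matrix.diagonal (fun i => (((s * b i) ^ 2 : ℝ) : ℂ)) := by
    have hM' : M = (s : ℂ) • ((k : Matrix (Fin q) (Fin q) ℂ) *
        Matrix.diagonal (fun i => (b i : ℂ))) := by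
      rw [hMdef, ← Matrix.smul_one_eq_diagonal, Matrix.smul_mul, Matrix.smul_mul, one_mul]
    rw [hM', Matrix.conjTranspose_smul, Matrix.conjTranspose_mul,
      Matrix.diagonal_conjTranspose]
    rw [smul_mul_smul_comm]
    have hstar : star (s : ℂ) * (s : ℂ) = (((s^2 : ℝ)) : ℂ) := by
      rw [Complex.star_def, Complex.conj_ofReal]
      push_cast
      ring
    have hmid : (Matrix.diagonal (star (fun i => (b i : ℂ))) *
          (k : Matrix (Fin q) (Fin q) ℂ).conjTranspose) *
          ((k : Matrix (Fin q) (Fin q) ℂ) * Matrix.diagonal (fun i => (b i : ℂ)))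
        = Matrix.diagonal (fun i => (((b i)^2 : ℝ) : ℂ)) := by
      rw [Matrix.mul_assoc, ← Matrix.mul_assoc ((k : Matrix (Fin q) (Fin q) ℂ).conjTranspose),
        ← Matrix.star_eq_conjTranspose, hkk, one_mul, Matrix.diagonal_mul_diagonal]
      congr 1
      funext i
      simp [Complex.conj_ofReal]
      push_cast
      ring
    rw [hmid, hstar]
    ext i j
    by_cases hij : i = j
    · subst hij
      simp [Matrix.diagonal_apply_eq]
      push_cast
      ring
    · simp [Matrix.diagonal_apply_ne _ hij]
  have hP := Matrix.posSemidef_conjTranspose_mul_self M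
  have hperm : (List.ofFn hP.1.eigenvalues).Perm (List.ofFn (fun i => (s * b i) ^ 2)) :=
    eig_perm_of_diagonal _ hP.1 _ hM
  set g : Fin q → ℝ := fun j => Real.sqrt (hP.1.eigenvalues j) with hg
  have h1 : (List.ofFn g).Perm (List.ofFn (fun i => s * b i)) := by
    have h2 := hperm.map Real.sqrt
    rw [List.map_ofFn, List.map_ofFn] at h2
    have e3 : (Real.sqrt ∘ fun i => (s * b i) ^ 2) = fun i => s * b i := by
      funext i
      exact Real.sqrt_sq (mul_nonneg hs (hb0 i))
    rw [e3] at h2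
    exact h2
  have hmono_g : Monotone (g ∘ Tuple.sort g) := Tuple.monotone_sort g
  have hf_anti : Antitone (fun i => s * b i) := fun i j hij =>
    mul_le_mul_of_nonneg_left (hbd i j hij) hs
  have hmono_f : Monotone ((fun i => s * b i) ∘ Fin.revPerm) := by
    intro i j hij
    exact hf_anti (by simpa using Fin.rev_le_rev.mpr hij)
  have hperm2 : (List.ofFn (g ∘ Tuple.sort g)).Perm
      (List.ofFn ((fun i => s * b i) ∘ Fin.revPerm)) :=
    (((Tuple.sort g).ofFn_comp_perm g).trans h1).trans
      (Fin.revPerm.ofFn_comp_perm (fun i => s * b i)).symm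
  have heq : g ∘ Tuple.sort g = (fun i => s * b i) ∘ Fin.revPerm :=
    List.ofFn_injective
      (hperm2.eq_of_sortedLE hmono_g.sortedLE_ofFn hmono_f.sortedLE_ofFn)
  funext i
  show (g ∘ Tuple.sort g) i.rev = s * b i
  rw [heq]
  show s * b (Fin.rev (Fin.rev i)) = s * b i
  rw [Fin.rev_rev]

theorem spherical_determined_by_D (q : ℕ) (hq : 1 ≤ q)
    (μ : Measure (Matrix.unitaryGroup (Fin q) ℂ)) [IsProbabilityMeasure μ]
    (hinv : ∀ (u : Matrix.unitaryGroup (Fin q) ℂ)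
      (F : Matrix.unitaryGroup (Fin q) ℂ → ℂ), ∫ k, F (u * k) ∂μ = ∫ k, F k ∂μ)
    (φ : (Fin q → ℝ) → ℂ) (hcont : ContinuousOn φ (A₀ q))
    (hnontriv : ∃ a ∈ A₀ q, φ a ≠ 0)
    (hprod : ∀ a ∈ A₀ q, ∀ b ∈ A₀ q,
      φ a * φ b = ∫ k, φ (singValsDec
        (Matrix.diagonal (fun i => (a i : ℂ)) * (k : Matrix (Fin q) (Fin q) ℂ) *
          Matrix.diagonal (fun i => (b i : ℂ)))) ∂μ) :
    (∀ r : ℝ, 0 < r → ∀ b ∈ Dset q, φ (r • b) = φ (fun _ => r) * φ b) ∧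
    (∀ r : ℝ, 1 ≤ r → φ (fun _ => r⁻¹) * φ (fun _ => r) = 1) ∧
    (∀ φ' : (Fin q → ℝ) → ℂ, ContinuousOn φ' (A₀ q) → (∃ a ∈ A₀ q, φ' a ≠ 0) →
      (∀ a ∈ A₀ q, ∀ b ∈ A₀ q,
        φ' a * φ' b = ∫ k, φ' (singValsDec
          (Matrix.diagonal (fun i => (a i : ℂ)) * (k : Matrix (Fin q) (Fin q) ℂ) *
            Matrix.diagonal (fun i => (b i : ℂ)))) ∂μ) →
      (∀ b ∈ Dset q, φ' b = φ b) → ∀ a ∈ A₀ q, φ' a = φ a) := by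
  classical
  have const_mem : ∀ s : ℝ, 0 < s → (fun _ : Fin q => s) ∈ A₀ q :=
    fun s hs => ⟨fun i j _ => le_refl s, fun _ => hs⟩
  -- the key multiplicativity for scalars, for any solution
  have key : ∀ ψ : (Fin q → ℝ) → ℂ,
      (∀ a ∈ A₀ q, ∀ b ∈ A₀ q,
        ψ a * ψ b = ∫ k, ψ (singValsDec
          (Matrix.diagonal (fun i => (a i : ℂ)) * (k : Matrix (Fin q) (Fin q) ℂ) *
            Matrix.diagonal (fun i => (b i : ℂ)))) ∂μ) →
      ∀ s : ℝ, 0 < s → ∀ b ∈ A₀ q, ψ (fun _ => s) * ψ b = ψ (fun i => s * b i) := by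
    intro ψ hψ s hs b hb
    rw [hψ _ (const_mem s hs) b hb]
    have hκ : ∀ k : Matrix.unitaryGroup (Fin q) ℂ,
        singValsDec (Matrix.diagonal (fun i => (((fun _ : Fin q => s) i : ℝ) : ℂ)) *
          (k : Matrix (Fin q) (Fin q) ℂ) * Matrix.diagonal (fun i => (b i : ℂ)))
          = fun i => s * b i :=
      fun k => singValsDec_scalar_mul s hs.le b hb.1 (fun i => (hb.2 i).le) k
    simp only [hκ, integral_const, probReal_univ, one_smul]
  -- value at the constant-one tuple
  have hone : ∀ ψ : (Fin q → ℝ) → ℂ,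
      (∀ a ∈ A₀ q, ∀ b ∈ A₀ q,
        ψ a * ψ b = ∫ k, ψ (singValsDec
          (Matrix.diagonal (fun i => (a i : ℂ)) * (k : Matrix (Fin q) (Fin q) ℂ) *
            Matrix.diagonal (fun i => (b i : ℂ)))) ∂μ) →
      (∃ a ∈ A₀ q, ψ a ≠ 0) → ψ (fun _ => 1) = 1 := by
    intro ψ hψ ⟨a, ha, hna⟩
    have h := key ψ hψ 1 one_pos a ha
    simp only [one_mul] at h
    exact mul_right_cancel₀ hna (by rw [h, one_mul])
  have hscal : ∀ ψ : (Fin q → ℝ) → ℂ,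
      (∀ a ∈ A₀ q, ∀ b ∈ A₀ q,
        ψ a * ψ b = ∫ k, ψ (singValsDec
          (Matrix.diagonal (fun i => (a i : ℂ)) * (k : Matrix (Fin q) (Fin q) ℂ) *
            Matrix.diagonal (fun i => (b i : ℂ)))) ∂μ) →
      ∀ u v : ℝ, 0 < u → 0 < v →
        ψ (fun _ => u) * ψ (fun _ => v) = ψ (fun _ => u * v) := by
    intro ψ hψ u v hu hv
    exact key ψ hψ u hu _ (const_mem v hv)
  refine ⟨?_, ?_, ?_⟩
  · intro r hr b hb
    have hbA : b ∈ A₀ q := ⟨hb.1, fun i => lt_of_lt_of_le one_pos (hb.2 i)⟩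
    have h := key φ hprod r hr b hbA
    have hsb : r • b = fun i => r * b i := by
      funext i
      simp [smul_eq_mul]
    rw [hsb, ← h]
  · intro r hr
    have hr0 : 0 < r := lt_of_lt_of_le one_pos hr
    have h := hscal φ hprod r⁻¹ r (inv_pos.mpr hr0) hr0
    have e : (fun _ : Fin q => r⁻¹ * r) = (fun _ : Fin q => (1 : ℝ)) := by
      funext _; exact inv_mul_cancel₀ hr0.ne'
    rw [h, e, hone φ hprod hnontriv]
  · intro φ' hcont' hnt' hprod' hagree a ha
    have hlast : ∀ i : Fin q, i ≤ (⟨q - 1, by omega⟩ : Fin q) := by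
      intro i
      have := i.isLt
      rw [Fin.le_def]
      show i.val ≤ q - 1
      omega
    set r : ℝ := a ⟨q - 1, by omega⟩ with hrdef
    have hr : 0 < r := ha.2 _
    set c : Fin q → ℝ := fun i => a i / r with hcdef
    have hcD : c ∈ Dset q := by
      refine ⟨fun i j hij => ?_, fun i => ?_⟩
      · exact div_le_div_of_nonneg_right (ha.1 i j hij) hr.le
      · exact (one_le_div hr).mpr (ha.1 i _ (hlast i))
    have hcA : c ∈ A₀ q := ⟨hcD.1, fun i => lt_of_lt_of_le one_pos (hcD.2 i)⟩
    have ha_eq : (fun i => r * c i) = a := by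
      funext i
      rw [hcdef]
      field_simp
    have h1 := key φ' hprod' r hr c hcA
    have h2 := key φ hprod r hr c hcA
    rw [ha_eq] at h1 h2
    have hc : φ' c = φ c := hagree c hcD
    have hconst : φ' (fun _ => r) = φ (fun _ => r) := by
      rcases le_or_gt 1 r with h | h
      · exact hagree _ ⟨fun i j _ => le_refl r, fun _ => h⟩
      · have hinv1 : (1 : ℝ) ≤ r⁻¹ := by
          rw [le_inv_comm₀ one_pos hr]
          simpa using h.le
        have hcinv : φ' (fun _ => r⁻¹) = φ (fun _ => r⁻¹) :=
          hagree _ ⟨fun i j _ => le_refl _, fun _ => hinv1⟩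
        have e : (fun _ : Fin q => r * r⁻¹) = (fun _ : Fin q => (1 : ℝ)) := by
          funext _; exact mul_inv_cancel₀ hr.ne'
        have u1 := hscal φ' hprod' r r⁻¹ hr (inv_pos.mpr hr)
        have u2 := hscal φ hprod r r⁻¹ hr (inv_pos.mpr hr)
        rw [e, hone φ' hprod' hnt'] at u1
        rw [e, hone φ hprod hnontriv] at u2
        have hne : φ (fun _ : Fin q => r⁻¹) ≠ 0 := by
          intro h0
          rw [h0, mul_zero] at u2
          exact one_ne_zero u2.symm
        rw [hcinv] at u1
        exact mul_right_cancel₀ hne (u1.trans u2.symm)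
    rw [← h1, ← h2, hc, hconst]
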